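/- Fix a partition C_1,…,C_K of Z, a hypothesis h with loss in [0,M], and a training set s of size n with N_i points in cell C_i. Then |L(h) − ℓ_emp(h)| ≤ (1/n)∑_{k=1}^K ∑_{j: s_j∈C_k} max_{z∈C_k}|ℓ(h,s_j) − ℓ(h,z)| + M·∑_{k=1}^K |N_k/n − μ(C_k)|. -/

import Mathlib

open MeasureTheory
open scoped Classical

/-- Deterministic decomposition over partition cells: for a partition `C_1,…,C_K` of `Z`, a
hypothesis with loss `ℓh` bounded in `[0,M]`, and a training set `s` of size `n` with `N_k`
points in cell `C_k`,
`|L(h) − ℓ_emp(h)| ≤ (1/n)∑_k ∑_{j: s_j∈C_k} max_{z∈C_k}|ℓh(s_j) − ℓh(z)|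
  + M·∑_k |N_k/n − μ(C_k)|`. -/
theorem stmt13 {Z : Type*} [MeasurableSpace Z]
    (μ : Measure Z) [IsProbabilityMeasure μ]
    (n K : ℕ) (hn : 0 < n) (hK : 0 < K)
    (ℓh : Z → ℝ) (M : ℝ) (hM : 0 < M)
    (hbd : ∀ z, 0 ≤ ℓh z ∧ ℓh z ≤ M) (hmeasℓ : Measurable ℓh)
    (C : Fin K → Set Z) (hmeasC : ∀ k, MeasurableSet (C k))
    (hdisj : ∀ k k', k ≠ k' → Disjoint (C k) (C k'))
    (hcover : ∀ z, ∃ k, z ∈ C k)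
    (s : Fin n → Z) :
    |(∫ z, ℓh z ∂μ) - (1 / (n : ℝ)) * ∑ i, ℓh (s i)| ≤
      (1 / (n : ℝ)) * (∑ k : Fin K,
          ∑ j ∈ Finset.univ.filter (fun j : Fin n => s j ∈ C k),
            ⨆ z : C k, |ℓh (s j) - ℓh z|) +
        M * ∑ k : Fin K,
          |((Finset.univ.filter fun i : Fin n => s i ∈ C k).card : ℝ) / n -
            (μ (C k)).toReal| := by
  classical
  have hn' : (0:ℝ) < n := by exact_mod_cast hn
  set F : Fin K → Finset (Fin n) := fun k => Finset.univ.filter (fun j : Fin n => s j ∈ C k)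
    with hF
  -- integrability
  have hint : Integrable ℓh μ := by
    refine (integrable_const M).mono' hmeasℓ.aestronglyMeasurable ?_
    filter_upwards with z
    rw [Real.norm_eq_abs, abs_of_nonneg (hbd z).1]
    exact (hbd z).2
  -- choose cell of each point
  choose κ hκ using hcover
  have hmem : ∀ z k, z ∈ C k ↔ κ z = k := by
    intro z k
    constructor
    · intro h
      by_contra hne
      exact ((hdisj k (κ z) fun e => hne e.symm).ne_of_mem h (hκ z)) rfl
    · rintro rfl; exact hκ z
  -- split the empirical sum
  have hsum_split : ∀ f : Fin n → ℝ, ∑ i, f i = ∑ k : Fin K, ∑ j ∈ F k, f j := by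
    intro f
    have : ∀ k, F k = Finset.univ.filter (fun j : Fin n => κ (s j) = k) := by
      intro k; ext j; simp [hF, hmem]
    simp_rw [this]
    exact (Finset.sum_fiberwise Finset.univ (fun j => κ (s j)) f).symm
  -- split the integral
  have hiUnion : (⋃ k, C k) = Set.univ := by
    ext z; simp only [Set.mem_iUnion, Set.mem_univ, iff_true]
    exact ⟨κ z, hκ z⟩
  have hintsplit : ∫ z, ℓh z ∂μ = ∑ k : Fin K, ∫ z in C k, ℓh z ∂μ := by
    rw [← setIntegral_univ (f := ℓh), ← hiUnion,
      integral_iUnion hmeasC ((pairwise_disjoint_on _).2 fun k k' h => hdisj k k' h.ne)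
        (hint.integrableOn.mono_set (by rw [hiUnion])),
      tsum_fintype]
  set A : Fin K → ℝ := fun k => (μ (C k)).toReal with hA
  set I : Fin K → ℝ := fun k => ∫ z in C k, ℓh z ∂μ with hI
  set E : Fin K → ℝ := fun k =>
    if μ (C k) = 0 then (if hne : (C k).Nonempty then ℓh hne.some else 0) else I k / A k
    with hE
  have hAnn : ∀ k, 0 ≤ A k := fun k => ENNReal.toReal_nonneg
  have hApos : ∀ k, μ (C k) ≠ 0 → 0 < A k := by
    intro k h0
    exact ENNReal.toReal_pos h0 (measure_ne_top μ _)
  have hIA : ∀ k, I k = A k * E k := by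
    intro k
    by_cases h0 : μ (C k) = 0
    · have hA0 : A k = 0 := by simp [hA, h0]
      simp [hI, Measure.restrict_eq_zero.2 h0, hA0]
    · have hEk : E k = I k / A k := by simp [hE, h0]
      rw [hEk]; field_simp [(hApos k h0).ne']
  have hIbd : ∀ k, 0 ≤ I k ∧ I k ≤ M * A k := by
    intro k
    constructor
    · exact setIntegral_nonneg (hmeasC k) fun z _ => (hbd z).1
    · calc I k ≤ ∫ _ in C k, M ∂μ :=
            setIntegral_mono_on hint.integrableOn (integrable_const M) (hmeasC k)
              fun z _ => (hbd z).2
        _ = M * A k := by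
            rw [setIntegral_const, smul_eq_mul]
            show (μ (C k)).toReal * M = M * (μ (C k)).toReal
            ring
  have hEbd : ∀ k, 0 ≤ E k ∧ E k ≤ M := by
    intro k
    by_cases h0 : μ (C k) = 0
    · simp only [hE, h0, if_true]
      split
      · exact hbd _
      · exact ⟨le_refl 0, hM.le⟩
    · have hA0 := hApos k h0
      simp only [hE, h0, if_false]
      constructor
      · exact div_nonneg (hIbd k).1 hA0.le
      · rw [div_le_iff₀ hA0]; exact (hIbd k).2
  have hbdd : ∀ k (j : Fin n), BddAbove (Set.range fun z : C k => |ℓh (s j) - ℓh z|) := by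
    intro k j
    refine ⟨M, ?_⟩
    rintro _ ⟨z, rfl⟩
    have h1 := hbd (s j); have h2 := hbd (z : Z)
    rw [abs_sub_le_iff]; constructor <;> linarith
  have hD : ∀ k, ∀ j ∈ F k, |E k - ℓh (s j)| ≤ ⨆ z : C k, |ℓh (s j) - ℓh z| := by
    intro k j hj
    have hjC : s j ∈ C k := by simpa [hF] using hj
    have hle : ∀ z : C k, |ℓh (s j) - ℓh z| ≤ ⨆ z : C k, |ℓh (s j) - ℓh z| :=
      fun z => le_ciSup (hbdd k j) z
    by_cases h0 : μ (C k) = 0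
    · have hne : (C k).Nonempty := ⟨s j, hjC⟩
      simp only [hE, h0, if_true, dif_pos hne]
      have := hle ⟨hne.some, hne.some_mem⟩
      rw [abs_sub_comm]
      exact this
    · have hA0 := hApos k h0
      have hEk : E k = I k / A k := by simp [hE, h0]
      have hdiff : E k - ℓh (s j) = (∫ z in C k, (ℓh z - ℓh (s j)) ∂μ) / A k := by
        rw [integral_sub hint.integrableOn (integrable_const _), setIntegral_const,
          hEk, smul_eq_mul]
        show I k / A k - ℓh (s j) = (I k - A k * ℓh (s j)) / A k
        field_simp
      rw [hdiff, abs_div, abs_of_pos hA0, div_le_iff₀ hA0]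
      have hb := norm_setIntegral_le_of_norm_le_const (μ := μ) (s := C k)
        (f := fun z => ℓh z - ℓh (s j))
        (C := ⨆ z : C k, |ℓh (s j) - ℓh z|) (measure_lt_top μ _)
        (fun z hz => by rw [Real.norm_eq_abs, abs_sub_comm]; exact hle ⟨z, hz⟩)
      rw [Real.norm_eq_abs] at hb
      exact hb
  -- main algebraic rearrangement
  have key : (∫ z, ℓh z ∂μ) - (1 / (n : ℝ)) * ∑ i, ℓh (s i)
      = (∑ k : Fin K, (A k - ((F k).card : ℝ) / n) * E k)
        + (1 / (n : ℝ)) * ∑ k : Fin K, ∑ j ∈ F k, (E k - ℓh (s j)) := by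
    rw [hintsplit, hsum_split (fun i => ℓh (s i)), Finset.mul_sum, Finset.mul_sum,
      ← Finset.sum_sub_distrib, ← Finset.sum_add_distrib]
    refine Finset.sum_congr rfl fun k _ => ?_
    rw [show (∫ z in C k, ℓh z ∂μ) = A k * E k from hIA k,
      Finset.sum_sub_distrib, Finset.sum_const, nsmul_eq_mul]
    field_simp
    ring
  rw [key]
  calc |(∑ k : Fin K, (A k - ((F k).card : ℝ) / n) * E k)
        + (1 / (n : ℝ)) * ∑ k : Fin K, ∑ j ∈ F k, (E k - ℓh (s j))|
      ≤ |∑ k : Fin K, (A k - ((F k).card : ℝ) / n) * E k|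
        + |(1 / (n : ℝ)) * ∑ k : Fin K, ∑ j ∈ F k, (E k - ℓh (s j))| := abs_add_le _ _
    _ ≤ (∑ k : Fin K, M * |((F k).card : ℝ) / n - A k|)
        + (1 / (n : ℝ)) * ∑ k : Fin K, ∑ j ∈ F k, (⨆ z : C k, |ℓh (s j) - ℓh z|) := by
        gcongr ?_ + ?_
        · calc |∑ k : Fin K, (A k - ((F k).card : ℝ) / n) * E k|
              ≤ ∑ k : Fin K, |(A k - ((F k).card : ℝ) / n) * E k| :=
                Finset.abs_sum_le_sum_abs _ _
            _ ≤ ∑ k : Fin K, M * |((F k).card : ℝ) / n - A k| := by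
                refine Finset.sum_le_sum fun k _ => ?_
                rw [abs_mul, abs_sub_comm, mul_comm M]
                exact mul_le_mul_of_nonneg_left
                  (by rw [abs_of_nonneg (hEbd k).1]; exact (hEbd k).2) (abs_nonneg _)
        · rw [abs_mul, abs_of_pos (by positivity : (0:ℝ) < 1 / (n:ℝ))]
          refine mul_le_mul_of_nonneg_left ?_ (by positivity)
          calc |∑ k : Fin K, ∑ j ∈ F k, (E k - ℓh (s j))|
              ≤ ∑ k : Fin K, ∑ j ∈ F k, |E k - ℓh (s j)| := by
                refine (Finset.abs_sum_le_sum_abs _ _).trans ?_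
                exact Finset.sum_le_sum fun k _ => Finset.abs_sum_le_sum_abs _ _
            _ ≤ _ := Finset.sum_le_sum fun k _ =>
                Finset.sum_le_sum fun j hj => hD k j hj
    _ = _ := by rw [← Finset.mul_sum]; ring
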